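/- Let B = k[x,y,z] be a polynomial ring over a field k of characteristic 0 with the locally nilpotent derivation δ given by δ(x) = 0, δ(y) = −2z, δ(z) = x². Then the kernel of δ equals k[x, t] where t = x²y + z², and k[x,t] is a polynomial ring in two variables (x and t are algebraically independent over k). -/

import Mathlib

open MvPolynomial

set_option linter.unusedSectionVars false

namespace Stmt18Aux

variable {k : Type*} [Field k] [CharZero k]

local notation "B" => MvPolynomial (Fin 3) k

noncomputable def mon (a b c : ℕ) : Fin 3 →₀ ℕ :=
  Finsupp.single 0 a + Finsupp.single 1 b + Finsupp.single 2 c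

lemma mon_apply0 (a b c : ℕ) : mon a b c 0 = a := by
  simp [mon, Finsupp.single_apply]

lemma mon_apply1 (a b c : ℕ) : mon a b c 1 = b := by
  simp [mon, Finsupp.single_apply]

lemma mon_apply2 (a b c : ℕ) : mon a b c 2 = c := by
  simp [mon, Finsupp.single_apply]

lemma mon_add_single1 (a b c : ℕ) :
    mon a b c + Finsupp.single 1 1 = mon a (b + 1) c := by
  simp only [mon, Finsupp.single_add]; abel

lemma mon_add_single2 (a b c : ℕ) :
    mon a b c + Finsupp.single 2 1 = mon a b (c + 1) := by
  simp only [mon, Finsupp.single_add]; abel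

lemma mon_add_single0 (a b c : ℕ) :
    mon a b c + Finsupp.single 0 1 = mon (a + 1) b c := by
  simp only [mon, Finsupp.single_add]; abel

lemma coeff_X2_mul (a b c : ℕ) (q : B) :
    coeff (mon a b (c + 1)) (X 2 * q) = coeff (mon a b c) q := by
  rw [show mon a b (c+1) = Finsupp.single 2 1 + mon a b c by rw [← mon_add_single2, add_comm],
    coeff_X_mul]

lemma coeff_X2_mul_zero (a b : ℕ) (q : B) :
    coeff (mon a b 0) (X 2 * q) = 0 := by
  rw [mul_comm, coeff_mul_X']
  rw [if_neg]
  simp [Finsupp.mem_support_iff, mon_apply2]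

lemma coeff_X0sq_mul (a b c : ℕ) (q : B) :
    coeff (mon (a + 2) b c) ((X 0) ^ 2 * q) = coeff (mon a b c) q := by
  have : ((X 0 : B)) ^ 2 * q = X 0 * (X 0 * q) := by ring
  rw [this,
    show mon (a+2) b c = Finsupp.single 0 1 + mon (a+1) b c by rw [← mon_add_single0, add_comm],
    coeff_X_mul,
    show mon (a+1) b c = Finsupp.single 0 1 + mon a b c by rw [← mon_add_single0, add_comm],
    coeff_X_mul]

lemma coeff_X0sq_mul_zero {a : ℕ} (ha : a ≤ 1) (b c : ℕ) (q : B) :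
    coeff (mon a b c) ((X 0) ^ 2 * q) = 0 := by
  have : ((X 0 : B)) ^ 2 * q = (X 0 * q) * X 0 := by ring
  rw [this, coeff_mul_X']
  interval_cases a
  · rw [if_neg]; simp [Finsupp.mem_support_iff, mon_apply0]
  · rw [if_pos (by simp [Finsupp.mem_support_iff, mon_apply0])]
    rw [mul_comm, coeff_mul_X', if_neg]
    simp [Finsupp.mem_support_iff, Finsupp.tsub_apply, mon_apply0]



set_option linter.unusedSectionVars false

lemma coeff_pderiv' (i : Fin 3) (m : Fin 3 →₀ ℕ) (p : B) :
    coeff m (pderiv i p) = ((m i + 1 : ℕ) : k) * coeff (m + Finsupp.single i 1) p := by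
  induction p using MvPolynomial.induction_on' with
  | monomial s a =>
    rw [pderiv_monomial, coeff_monomial, coeff_monomial]
    by_cases h : s = m + Finsupp.single i 1
    · subst h
      have h1 : m + Finsupp.single i 1 - Finsupp.single i 1 = m :=
        add_tsub_cancel_right (a := m) (b := Finsupp.single i 1)
      have h2 : ((m + Finsupp.single i 1 : Fin 3 →₀ ℕ)) i = m i + 1 := by
        simp [Finsupp.add_apply, Finsupp.single_eq_same]
      rw [if_pos h1, if_pos rfl, h2]
      push_cast
      ring
    · rw [if_neg h]
      by_cases h' : s - Finsupp.single i 1 = m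
      · rw [if_pos h']
        have hsi : s i = 0 := by
          by_contra hne
          apply h
          rw [← h']
          ext j
          rcases eq_or_ne j i with rfl | hji
          · simp only [Finsupp.add_apply, Finsupp.tsub_apply, Finsupp.single_eq_same]
            omega
          · simp [Finsupp.tsub_apply, Finsupp.single_eq_of_ne' (Ne.symm hji)]
        simp [hsi]
      · rw [if_neg h', mul_zero]
  | add p q hp hq =>
    simp only [map_add, coeff_add, hp, hq]
    ring

lemma coeff_pd1 (a b c : ℕ) (p : B) :
    coeff (mon a b c) (pderiv 1 p) = ((b + 1 : ℕ) : k) * coeff (mon a (b+1) c) p := by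
  rw [coeff_pderiv', mon_apply1, mon_add_single1]

lemma coeff_pd2 (a b c : ℕ) (p : B) :
    coeff (mon a b c) (pderiv 2 p) = ((c + 1 : ℕ) : k) * coeff (mon a b (c+1)) p := by
  rw [coeff_pderiv', mon_apply2, mon_add_single2]

section Master

variable {p : MvPolynomial (Fin 3) k}
  (hrel : ∀ s : Fin 3 →₀ ℕ,
    coeff s ((-(2 : MvPolynomial (Fin 3) k) * X 2) * pderiv 1 p + (X 0) ^ 2 * pderiv 2 p) = 0)

lemma coeff_neg_two (s : Fin 3 →₀ ℕ) (q : B) :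
    coeff s ((-(2 : B) * X 2) * q) = (-2 : k) * coeff s (X 2 * q) := by
  have h1 : (-(2 : B) * X 2) * q = C (-2 : k) * (X 2 * q) := by
    have : (C (-2 : k) : B) = -(2 : B) := by
      simp [map_neg, map_ofNat]
    rw [this]; ring
  rw [h1, coeff_C_mul]

include hrel in
lemma master1 (a b c : ℕ) :
    (2 : k) * ((b + 1 : ℕ) : k) * coeff (mon (a+2) (b+1) c) p
      = ((c + 2 : ℕ) : k) * coeff (mon a b (c+2)) p := by
  have h := hrel (mon (a+2) b (c+1))
  rw [coeff_add, coeff_neg_two, coeff_X2_mul, coeff_pd1,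
    coeff_X0sq_mul, coeff_pd2] at h
  have : ((c + 1 : ℕ) + 1 : ℕ) = c + 2 := by omega
  rw [this] at h
  push_cast at h ⊢
  linear_combination -h

include hrel in
lemma master2 {a : ℕ} (ha : a ≤ 1) (b c : ℕ) :
    coeff (mon a (b+1) c) p = 0 := by
  have h := hrel (mon a b (c+1))
  rw [coeff_add, coeff_neg_two, coeff_X2_mul, coeff_pd1,
    coeff_X0sq_mul_zero ha] at h
  have h2 : ((b+1 : ℕ) : k) ≠ 0 := Nat.cast_ne_zero.mpr (Nat.succ_ne_zero b)
  have h3 : ((b+1 : ℕ) : k) * coeff (mon a (b+1) c) p = 0 := by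
    push_cast at h ⊢
    linear_combination (-1/2 : k) * h
  exact (mul_eq_zero.mp h3).resolve_left h2

include hrel in
lemma master3 (a b : ℕ) : coeff (mon a b 1) p = 0 := by
  have h := hrel (mon (a+2) b 0)
  rw [coeff_add, coeff_neg_two, coeff_X2_mul_zero, coeff_X0sq_mul, coeff_pd2] at h
  simpa using h

include hrel in
lemma odd_zero (n a b : ℕ) : coeff (mon a b (2*n+1)) p = 0 := by
  induction n generalizing a b with
  | zero => simpa using master3 hrel a b
  | succ n ih =>
    have h := master1 hrel a b (2*n+1)
    have h2 : ((2*n+1) + 2 : ℕ) = 2*(n+1)+1 := by omega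
    rw [h2, ih (a+2) (b+1)] at h
    have hc : ((2*(n+1)+1 : ℕ) : k) ≠ 0 := Nat.cast_ne_zero.mpr (by omega)
    have := h.symm
    rw [mul_zero] at h
    exact (mul_eq_zero.mp h.symm).resolve_left hc

include hrel in
lemma low_zero : ∀ b a c, a < 2*b → coeff (mon a b c) p = 0 := by
  intro b
  induction b with
  | zero => intro a c h; omega
  | succ b ih =>
    intro a c h
    rcases Nat.lt_or_ge a 2 with ha | ha
    · exact master2 hrel (by omega) b c
    · obtain ⟨a', rfl⟩ : ∃ a', a = a' + 2 := ⟨a - 2, by omega⟩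
      have h1 := master1 hrel a' b c
      rw [ih a' (c+2) (by omega)] at h1
      have hb : (2:k) * ((b+1 : ℕ):k) ≠ 0 :=
        mul_ne_zero two_ne_zero (Nat.cast_ne_zero.mpr (Nat.succ_ne_zero b))
      rw [mul_zero] at h1
      rcases mul_eq_zero.mp h1 with h' | h'
      · exact absurd h' hb
      · exact h'

include hrel in
lemma determination : ∀ b a c,
    coeff (mon (a + 2*b) b (2*c)) p
      = ((Nat.choose (b+c) b : ℕ) : k) * coeff (mon a 0 (2*c + 2*b)) p := by
  intro b
  induction b with
  | zero => intro a c; simp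
  | succ b ih =>
    intro a c
    have h1 := master1 hrel (a + 2*b) b (2*c)
    have e1 : (a + 2*b) + 2 = a + 2*(b+1) := by omega
    have e2 : (2*c) + 2 = 2*(c+1) := by omega
    rw [e1, e2] at h1
    rw [ih a (c+1)] at h1
    -- h1 : 2 * (b+1) * coeff (mon (a+2(b+1)) (b+1) (2c)) = (2c+2) * (choose (b+c+1) b * coeff (mon a 0 (2(c+1)+2b)))
    have e3 : 2*(c+1) + 2*b = 2*c + 2*(b+1) := by omega
    rw [e3] at h1
    have hb : ((b + 1 : ℕ) : k) ≠ 0 := Nat.cast_ne_zero.mpr (Nat.succ_ne_zero b)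
    have hchoose : (b+1) * Nat.choose (b+1+c) (b+1) = (c+1) * Nat.choose (b+c+1) b := by
      have := Nat.choose_succ_right_eq (b+c+1) b
      have e4 : b + c + 1 - b = c + 1 := by omega
      rw [e4] at this
      have e5 : b + 1 + c = b + c + 1 := by omega
      rw [e5]
      simpa [mul_comm] using this
    apply mul_left_cancel₀
      (mul_ne_zero two_ne_zero (Nat.cast_ne_zero.mpr (Nat.succ_ne_zero b)) :
        (2:k) * ((b+1:ℕ):k) ≠ 0)
    rw [h1]
    have : ((2:k) * ((b+1:ℕ):k)) * (((Nat.choose (b+1+c) (b+1) : ℕ) : k)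
        * coeff (mon a 0 (2*c + 2*(b+1))) p)
        = (2:k) * ((((b+1) * Nat.choose (b+1+c) (b+1) : ℕ) : k)
        * coeff (mon a 0 (2*c + 2*(b+1))) p) := by
      push_cast; ring
    rw [this, hchoose]
    push_cast
    ring

end Master

lemma eq_mon (s : Fin 3 →₀ ℕ) : s = mon (s 0) (s 1) (s 2) := by
  ext j
  fin_cases j
  · simp [mon_apply0]
  · simp [mon_apply1]
  · simp [mon_apply2]

lemma mon_eq_iff {a b c : ℕ} {s : Fin 3 →₀ ℕ} :
    mon a b c = s ↔ a = s 0 ∧ b = s 1 ∧ c = s 2 := by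
  constructor
  · rintro rfl
    exact ⟨(mon_apply0 a b c).symm ▸ rfl, (mon_apply1 a b c).symm ▸ rfl,
      (mon_apply2 a b c).symm ▸ rfl⟩
  · rintro ⟨rfl, rfl, rfl⟩
    exact (eq_mon s).symm

lemma Xpow_term (i m j : ℕ) :
    (X 0 : B) ^ i * ((X 0 ^ 2 * X 1) ^ m * (X 2 ^ 2) ^ (j - m))
      = monomial (mon (i + 2*m) m (2*(j-m))) (1 : k) := by
  rw [mon]
  rw [show ((X 0 : B) ^ i * ((X 0 ^ 2 * X 1) ^ m * (X 2 ^ 2) ^ (j - m)))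
    = X 0 ^ (i + 2*m) * X 1 ^ m * X 2 ^ (2*(j-m)) by ring]
  rw [X_pow_eq_monomial, X_pow_eq_monomial, X_pow_eq_monomial, monomial_mul, monomial_mul]
  simp

lemma coeff_X0_pow_t_pow (i j : ℕ) (s : Fin 3 →₀ ℕ) :
    coeff s ((X 0 : B) ^ i * ((X 0 : B) ^ 2 * X 1 + (X 2) ^ 2) ^ j)
      = if s 0 = i + 2 * s 1 ∧ s 1 ≤ j ∧ s 2 = 2 * (j - s 1)
        then ((Nat.choose j (s 1) : ℕ) : k) else 0 := by
  rw [add_pow]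
  rw [Finset.mul_sum]
  have hterm : ∀ m ∈ Finset.range (j+1),
      (X 0 : B) ^ i
        * ((X 0 ^ 2 * X 1) ^ m * (X 2 ^ 2) ^ (j - m) * (Nat.choose j m : B))
      = monomial (mon (i + 2*m) m (2*(j-m))) ((Nat.choose j m : ℕ) : k) := by
    intro m _
    have : ((Nat.choose j m : ℕ) : B) = C ((Nat.choose j m : ℕ) : k) := by
      simp
    rw [this]
    rw [show (X 0 : B) ^ i
        * ((X 0 ^ 2 * X 1) ^ m * (X 2 ^ 2) ^ (j - m) * C ((Nat.choose j m : ℕ) : k))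
      = C ((Nat.choose j m : ℕ) : k) * (X 0 ^ i * ((X 0 ^ 2 * X 1) ^ m * (X 2 ^ 2) ^ (j - m)))
      by ring]
    rw [Xpow_term, C_mul_monomial, mul_one]
  rw [Finset.sum_congr rfl hterm]
  rw [coeff_sum]
  by_cases hs : s 1 ≤ j
  · rw [Finset.sum_eq_single (s 1)]
    · rw [coeff_monomial]
      by_cases hc : mon (i + 2 * s 1) (s 1) (2*(j - s 1)) = s
      · rw [if_pos hc]
        rw [mon_eq_iff] at hc
        rw [if_pos ⟨hc.1.symm, hs, hc.2.2.symm⟩]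
      · rw [if_neg hc, if_neg]
        rintro ⟨h1, h2, h3⟩
        exact hc (mon_eq_iff.mpr ⟨h1.symm, rfl, h3.symm⟩)
    · intro m _ hm
      rw [coeff_monomial, if_neg]
      intro hc
      rw [mon_eq_iff] at hc
      exact hm hc.2.1
    · intro h
      exact absurd (Finset.mem_range.mpr (by omega)) h
  · rw [if_neg (by tauto)]
    apply Finset.sum_eq_zero
    intro m hm
    rw [Finset.mem_range] at hm
    rw [coeff_monomial, if_neg]
    intro hc
    rw [mon_eq_iff] at hc
    omega

lemma mem_adjoin_of_rel {p : MvPolynomial (Fin 3) k}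
    (hrel : ∀ s : Fin 3 →₀ ℕ,
      coeff s ((-(2 : MvPolynomial (Fin 3) k) * X 2) * pderiv 1 p + (X 0) ^ 2 * pderiv 2 p) = 0) :
    p ∈ Algebra.adjoin k
      {(X 0 : MvPolynomial (Fin 3) k), (X 0) ^ 2 * X 1 + (X 2) ^ 2} := by
  classical
  set t : B := (X 0 : B) ^ 2 * X 1 + (X 2) ^ 2 with ht
  set T : Finset (ℕ × ℕ) := p.support.image (fun s => (s 0 - 2 * s 1, s 1 + s 2 / 2)) with hT
  have hpq : p = ∑ ij ∈ T, C (coeff (mon ij.1 0 (2 * ij.2)) p) * ((X 0 : B) ^ ij.1 * t ^ ij.2) := by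
    apply MvPolynomial.ext
    intro s
    rw [coeff_sum]
    have hterm : ∀ ij ∈ T,
        coeff s (C (coeff (mon ij.1 0 (2 * ij.2)) p) * ((X 0 : B) ^ ij.1 * t ^ ij.2))
        = coeff (mon ij.1 0 (2 * ij.2)) p *
          (if s 0 = ij.1 + 2 * s 1 ∧ s 1 ≤ ij.2 ∧ s 2 = 2 * (ij.2 - s 1)
            then ((Nat.choose ij.2 (s 1) : ℕ) : k) else 0) := by
      intro ij _
      rw [coeff_C_mul, ht, coeff_X0_pow_t_pow]
    rw [Finset.sum_congr rfl hterm]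
    by_cases h1 : 2 * s 1 ≤ s 0
    · by_cases h2 : 2 ∣ s 2
      · obtain ⟨c, hc⟩ := h2
        -- main case
        have hkey : ∀ ij ∈ T,
            (coeff (mon ij.1 0 (2 * ij.2)) p *
              (if s 0 = ij.1 + 2 * s 1 ∧ s 1 ≤ ij.2 ∧ s 2 = 2 * (ij.2 - s 1)
                then ((Nat.choose ij.2 (s 1) : ℕ) : k) else 0))
            = (if ij = (s 0 - 2 * s 1, s 1 + c)
                then coeff (mon (s 0 - 2 * s 1) 0 (2 * (s 1 + c))) p
                  * ((Nat.choose (s 1 + c) (s 1) : ℕ) : k) else 0) := by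
          intro ij _
          by_cases hij : ij = (s 0 - 2 * s 1, s 1 + c)
          · rw [if_pos hij, hij]
            rw [if_pos ⟨by omega, by omega, by omega⟩]
          · rw [if_neg hij]
            rw [if_neg, mul_zero]
            rintro ⟨e1, e2, e3⟩
            apply hij
            have : ij.2 = s 1 + c := by omega
            have h1' : ij.1 = s 0 - 2 * s 1 := by omega
            cases ij
            simp only [Prod.mk.injEq]
            exact ⟨h1', this⟩
        rw [Finset.sum_congr rfl hkey, Finset.sum_ite_eq' T]
        by_cases hmem : (s 0 - 2 * s 1, s 1 + c) ∈ T
        · rw [if_pos hmem]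
          have hdet := determination hrel (s 1) (s 0 - 2 * s 1) c
          rw [show (s 0 - 2 * s 1) + 2 * s 1 = s 0 by omega] at hdet
          rw [show 2 * c + 2 * s 1 = 2 * (s 1 + c) by omega] at hdet
          rw [show s 1 + c = (s 1) + c from rfl] at hdet
          conv_lhs => rw [eq_mon s, hc]
          rw [hdet]
          rw [mul_comm]
        · rw [if_neg hmem]
          by_contra hne
          apply hmem
          rw [hT]
          apply Finset.mem_image.mpr
          refine ⟨s, mem_support_iff.mpr (fun h0 => hne (by rw [h0])), ?_⟩
          simp only [Prod.mk.injEq]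
          refine ⟨trivial, ?_⟩
          rw [hc]
          omega
      · -- s 2 odd
        have hodd : coeff s p = 0 := by
          obtain ⟨n, hn⟩ : ∃ n, s 2 = 2 * n + 1 := ⟨s 2 / 2, by omega⟩
          rw [eq_mon s, hn]
          exact odd_zero hrel n (s 0) (s 1)
        rw [hodd]
        symm
        apply Finset.sum_eq_zero
        intro ij _
        rw [if_neg, mul_zero]
        rintro ⟨e1, e2, e3⟩
        omega
    · -- s 0 < 2 * s 1
      have hlow : coeff s p = 0 := by
        rw [eq_mon s]
        exact low_zero hrel (s 1) (s 0) (s 2) (by omega)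
      rw [hlow]
      symm
      apply Finset.sum_eq_zero
      intro ij _
      rw [if_neg, mul_zero]
      rintro ⟨e1, e2, e3⟩
      omega
  rw [hpq]
  apply Subalgebra.sum_mem
  intro ij _
  have hX : (X 0 : B) ∈ Algebra.adjoin k {(X 0 : B), t} :=
    Algebra.subset_adjoin (Set.mem_insert _ _)
  have hts : t ∈ Algebra.adjoin k {(X 0 : B), t} :=
    Algebra.subset_adjoin (Set.mem_insert_of_mem _ rfl)
  exact mul_mem (Subalgebra.algebraMap_mem _ _)
    (mul_mem (pow_mem hX _) (pow_mem hts _))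




noncomputable def phi2 (s : Fin 2 →₀ ℕ) : Fin 3 →₀ ℕ :=
  Finsupp.single 0 (s 0 + 2 * s 1) + Finsupp.single 1 (s 1)

lemma phi2_inj : Function.Injective (phi2) := by
  intro s s' h
  have h0 : (phi2 s) 0 = (phi2 s') 0 := by rw [h]
  have h1 : (phi2 s) 1 = (phi2 s') 1 := by rw [h]
  simp only [phi2, Finsupp.add_apply, Finsupp.single_apply] at h0 h1
  norm_num at h0 h1
  ext j
  fin_cases j
  · show s 0 = s' 0; omega
  · show s 1 = s' 1; omega

lemma psi_monomial (s : Fin 2 →₀ ℕ) (a : k) :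
    aeval ![(X 0 : MvPolynomial (Fin 3) k), X 0 ^ 2 * X 1] (monomial s a)
      = monomial (phi2 s) a := by
  rw [aeval_monomial]
  rw [Finsupp.prod_fintype _ _ (fun i => pow_zero _)]
  rw [Fin.prod_univ_two]
  simp only [Matrix.cons_val_zero, Matrix.cons_val_one, Matrix.head_cons]
  rw [show ((X 0 : MvPolynomial (Fin 3) k) ^ (s 0) * (X 0 ^ 2 * X 1) ^ (s 1))
    = X 0 ^ (s 0 + 2 * s 1) * X 1 ^ (s 1) by ring]
  rw [X_pow_eq_monomial, X_pow_eq_monomial, monomial_mul, phi2]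
  rw [algebraMap_eq, C_mul_monomial]
  simp

lemma psi_inj : Function.Injective
    (aeval ![(X 0 : MvPolynomial (Fin 3) k), X 0 ^ 2 * X 1] :
      MvPolynomial (Fin 2) k →ₐ[k] MvPolynomial (Fin 3) k) := by
  rw [injective_iff_map_eq_zero]
  intro q hq
  by_contra hq0
  obtain ⟨s₀, hs₀⟩ := support_nonempty.mpr hq0
  have hsum : aeval ![(X 0 : MvPolynomial (Fin 3) k), X 0 ^ 2 * X 1] q
      = ∑ s ∈ q.support, monomial (phi2 s) (coeff s q) := by
    conv_lhs => rw [as_sum q]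
    rw [map_sum]
    exact Finset.sum_congr rfl fun s _ => psi_monomial s _
  have := congrArg (coeff (phi2 s₀)) hsum
  rw [hq, coeff_zero, coeff_sum] at this
  rw [Finset.sum_eq_single s₀ (fun s _ hne => by
      rw [coeff_monomial, if_neg (fun hc => hne (phi2_inj hc))])
    (fun h => absurd hs₀ h)] at this
  rw [coeff_monomial, if_pos rfl] at this
  exact (mem_support_iff.mp hs₀) this.symm

lemma alg_indep : AlgebraicIndependent k
    ![(X 0 : MvPolynomial (Fin 3) k), (X 0) ^ 2 * X 1 + (X 2) ^ 2] := by
  rw [algebraicIndependent_iff_injective_aeval]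
  let E : MvPolynomial (Fin 3) k →ₐ[k] MvPolynomial (Fin 3) k :=
    aeval (R := k) (![X 0, X 1, 0] : Fin 3 → MvPolynomial (Fin 3) k)
  have hE : E = aeval (R := k) (![X 0, X 1, 0] : Fin 3 → MvPolynomial (Fin 3) k) := rfl
  have hcomp : ∀ q : MvPolynomial (Fin 2) k,
      E (aeval (R := k) ![(X 0 : MvPolynomial (Fin 3) k), (X 0) ^ 2 * X 1 + (X 2) ^ 2] q)
      = aeval (R := k) ![(X 0 : MvPolynomial (Fin 3) k), X 0 ^ 2 * X 1] q := by
    intro q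
    induction q using MvPolynomial.induction_on with
    | C a => simp [hE]
    | add p q hp hq => simp only [map_add, hp, hq]
    | mul_X p i hp =>
      rw [map_mul, map_mul, map_mul, hp]
      congr 1
      fin_cases i
      · show E ((aeval ![(X 0 : MvPolynomial (Fin 3) k), (X 0) ^ 2 * X 1 + (X 2) ^ 2]) (X 0))
          = (aeval ![(X 0 : MvPolynomial (Fin 3) k), X 0 ^ 2 * X 1]) (X 0)
        rw [aeval_X, aeval_X]
        rw [show (![(X 0 : MvPolynomial (Fin 3) k), (X 0) ^ 2 * X 1 + (X 2) ^ 2]) 0 = X 0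
          from rfl, show (![(X 0 : MvPolynomial (Fin 3) k), X 0 ^ 2 * X 1]) 0 = X 0 from rfl, hE]
        simp
      · show E ((aeval ![(X 0 : MvPolynomial (Fin 3) k), (X 0) ^ 2 * X 1 + (X 2) ^ 2]) (X 1))
          = (aeval ![(X 0 : MvPolynomial (Fin 3) k), X 0 ^ 2 * X 1]) (X 1)
        rw [aeval_X, aeval_X]
        rw [show (![(X 0 : MvPolynomial (Fin 3) k), (X 0) ^ 2 * X 1 + (X 2) ^ 2]) 1
          = (X 0) ^ 2 * X 1 + (X 2) ^ 2 from rfl,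
          show (![(X 0 : MvPolynomial (Fin 3) k), X 0 ^ 2 * X 1]) 1 = X 0 ^ 2 * X 1 from rfl, hE]
        simp
  intro q1 q2 h
  apply psi_inj
  rw [← hcomp q1, ← hcomp q2, h]



lemma deriv_eq (δ : Derivation k B B)
    (hx : δ (X 0) = 0)
    (hy : δ (X 1) = -(2 : B) * X 2)
    (hz : δ (X 2) = (X 0) ^ 2) (p : B) :
    δ p = (-(2 : B) * X 2) * pderiv 1 p + (X 0) ^ 2 * pderiv 2 p := by
  have : δ = (-(2 : B) * X 2) • (pderiv 1 : Derivation k B B)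
      + ((X 0 : B) ^ 2) • (pderiv 2 : Derivation k B B) := by
    apply MvPolynomial.derivation_ext
    intro i
    fin_cases i <;>
      simp [hx, hy, hz, Derivation.add_apply, Derivation.smul_apply]
  rw [this]
  simp [Derivation.add_apply, Derivation.smul_apply, smul_eq_mul]


lemma deriv_zero_of_mem (δ : Derivation k B B)
    (hx : δ (X 0) = 0)
    (hy : δ (X 1) = -(2 : B) * X 2)
    (hz : δ (X 2) = (X 0) ^ 2) {b : B}
    (hb : b ∈ Algebra.adjoin k {(X 0 : B), (X 0) ^ 2 * X 1 + (X 2) ^ 2}) :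
    δ b = 0 := by
  induction hb using Algebra.adjoin_induction with
  | mem x hmem =>
    rcases Set.mem_insert_iff.mp hmem with rfl | hmem'
    · exact hx
    · rw [Set.mem_singleton_iff.mp hmem']
      rw [map_add, Derivation.leibniz, Derivation.leibniz_pow, Derivation.leibniz_pow,
        hx, hy, hz]
      simp only [smul_eq_mul, smul_zero, mul_zero, zero_add, add_zero]
      ring
  | algebraMap r => exact Derivation.map_algebraMap δ r
  | add x y _ _ h1 h2 => rw [map_add, h1, h2, add_zero]
  | mul x y _ _ h1 h2 => rw [Derivation.leibniz, h1, h2, smul_zero, smul_zero, add_zero]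

end Stmt18Aux

open Stmt18Aux in
/-- Example 4.1: for the locally nilpotent derivation `δ` of `B = k[x,y,z]` with
`δ x = 0`, `δ y = -2z`, `δ z = x²`, the kernel of `δ` is `k[x, t]` with
`t = x²y + z²`, and `x, t` are algebraically independent over `k`. -/
theorem stmt18 {k : Type*} [Field k] [CharZero k]
    (δ : Derivation k (MvPolynomial (Fin 3) k) (MvPolynomial (Fin 3) k))
    (hx : δ (X 0) = 0)
    (hy : δ (X 1) = -(2 : MvPolynomial (Fin 3) k) * X 2)
    (hz : δ (X 2) = (X 0) ^ 2) :
    (∀ b : MvPolynomial (Fin 3) k,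
      δ b = 0 ↔ b ∈ Algebra.adjoin k
        {(X 0 : MvPolynomial (Fin 3) k), (X 0) ^ 2 * X 1 + (X 2) ^ 2}) ∧
    AlgebraicIndependent k
      ![(X 0 : MvPolynomial (Fin 3) k), (X 0) ^ 2 * X 1 + (X 2) ^ 2] := by
  constructor
  · intro b
    constructor
    · intro hb
      apply mem_adjoin_of_rel
      intro s
      rw [← deriv_eq δ hx hy hz b, hb, coeff_zero]
    · intro hb
      exact deriv_zero_of_mem δ hx hy hz hb
  · exact alg_indep
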